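/- Let m ≥ 1, let t be a tree on vertex set [m] (that is, a connected acyclic simple graph with vertex set [m]), let p be a probability mass function on [m], and let a > 0. Then Σ_{{i,j} ∈ E(t)} p_i p_j ≤ max_{v ∈ [m]} p_v, and consequently Π_{{i,j} ∈ E(t)} ( (exp(a p_i p_j) − 1)/(a p_i p_j) ) ≤ exp( a · max_{v ∈ [m]} p_v ). -/

import Mathlib

open SimpleGraph Walk Finset

lemma aux_exp_div (x : ℝ) (hx : 0 < x) : (Real.exp x - 1) / x ≤ Real.exp x := by
  rw [div_le_iff₀ hx]
  have h : Real.exp x * (-x + 1) ≤ 1 := by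
    have := mul_le_mul_of_nonneg_left (Real.add_one_le_exp (-x)) (Real.exp_pos x).le
    rwa [← Real.exp_add, add_neg_cancel, Real.exp_zero] at this
  nlinarith [h]

lemma tree_sum_le (m : ℕ) (hm : 1 ≤ m) (t : SimpleGraph (Fin m)) (ht : t.IsTree)
    (p : Fin m → ℝ) (hp : ∀ v, 0 < p v) (hsum : ∑ v, p v = 1) :
    (∑ e ∈ (Set.toFinite t.edgeSet).toFinset,
        Sym2.lift ⟨fun i j => p i * p j, fun i j => mul_comm _ _⟩ e) ≤ (⨆ v, p v) := by
  classical
  haveI : Nonempty (Fin m) := ⟨⟨0, hm⟩⟩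
  set root : Fin m := ⟨0, hm⟩ with hroot
  set M := ⨆ v, p v with hMdef
  have hM : ∀ v, p v ≤ M := fun v => le_ciSup (Set.Finite.bddAbove (Set.finite_range p)) v
  have hM0 : (0:ℝ) ≤ M := le_trans (hp root).le (hM root)
  set g : Sym2 (Fin m) → ℝ := Sym2.lift ⟨fun i j => p i * p j, fun i j => mul_comm _ _⟩ with hg
  choose f hf hf' using (ht.existsUnique_path · root)
  set F : Fin m → Sym2 (Fin m) := fun w =>
    if h : w = root then s(root, root) else ((f w).firstDart (not_nil_of_ne h)).edge with hFdef
  have hF : ∀ (w : Fin m) (h : w ≠ root), F w = ((f w).firstDart (not_nil_of_ne h)).edge :=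
    fun w h => dif_neg h
  have key : ∑ w ∈ ({root} : Finset (Fin m))ᶜ, g (F w)
      = ∑ e ∈ (Set.toFinite t.edgeSet).toFinset, g e := by
    refine Finset.sum_bij (fun w _ => F w) (fun a ha => ?_) ?_ ?_ (fun a ha => rfl)
    · show F a ∈ (Set.toFinite t.edgeSet).toFinset
      rw [Set.Finite.mem_toFinset, hF a (by simpa using Finset.mem_compl.mp ha)]
      exact Dart.edge_mem _
    · intros a ha b hb h
      replace h : F a = F b := h
      rw [hF a (by simpa using Finset.mem_compl.mp ha),
          hF b (by simpa using Finset.mem_compl.mp hb)] at h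
      wlog h' : (f a).length ≤ (f b).length generalizing a b
      · exact Eq.symm (this _ hb _ ha h.symm (le_of_not_ge h'))
      rw [dart_edge_eq_iff] at h
      obtain (h | h) := h
      · exact (congrArg (·.fst) h)
      · have h1 : (f a).snd = b :=
          congrArg (·.snd) h
        have h3 := congrArg length (hf' _ ((f _).tail.copy h1 rfl) ?_)
        · rw [length_copy, ← add_left_inj 1,
            length_tail_add_one (not_nil_of_ne (by simpa using Finset.mem_compl.mp ha))] at h3
          omega
        · simp only [ne_eq, eq_mp_eq_cast, id_eq, isPath_copy]
          exact (hf _).tail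
    · simp only [Set.Finite.mem_toFinset, Sym2.forall, SimpleGraph.mem_edgeSet]
      intros x y h
      wlog h' : (f x).length ≤ (f y).length generalizing x y
      · rw [Sym2.eq_swap]
        exact this y x h.symm (le_of_not_ge h')
      have hy0 : y ≠ root := by
        rintro rfl
        rw [← hf' _ nil IsPath.nil, length_nil,
            ← hf' _ (.cons h .nil) (IsPath.nil.cons <| by simpa using h.ne),
            length_cons, length_nil] at h'
        simp [Nat.le_zero, Nat.one_ne_zero] at h'
      refine ⟨y, by simpa using hy0, ?_⟩
      rw [hF y hy0]
      refine dart_edge_eq_mk'_iff.2 <| Or.inr ?_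
      rw [← hf' _ (.cons h.symm (f x)) ((cons_isPath_iff _ _).2 ⟨hf _, fun hy => ?contra⟩)]
      · simp only [firstDart_toProd, getVert_cons_succ, getVert_zero, Prod.swap_prod_mk]
      case contra =>
        suffices (f x).takeUntil y hy = .cons h .nil by
          rw [← take_spec _ hy] at h'
          simp [this, hf' _ _ ((hf _).dropUntil hy)] at h'
        refine (ht.existsUnique_path _ _).unique ((hf _).takeUntil _) ?_
        simp [h.ne]
  rw [← key]
  have hterm : ∀ w ∈ ({root} : Finset (Fin m))ᶜ, g (F w) ≤ p w * M := by
    intro w hw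
    have hw' : w ≠ root := by simpa using Finset.mem_compl.mp hw
    rw [hF w hw']
    have : ((f w).firstDart (not_nil_of_ne hw')).edge
        = s(w, ((f w).firstDart (not_nil_of_ne hw')).snd) := by
      simp [Dart.edge, Walk.firstDart]
    rw [this, hg]
    simp only [Sym2.lift_mk]
    exact mul_le_mul_of_nonneg_left (hM _) (hp w).le
  calc ∑ w ∈ ({root} : Finset (Fin m))ᶜ, g (F w)
      ≤ ∑ w ∈ ({root} : Finset (Fin m))ᶜ, p w * M := Finset.sum_le_sum hterm
    _ ≤ ∑ w, p w * M := Finset.sum_le_sum_of_subset_of_nonneg (Finset.subset_univ _)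
        (fun i _ _ => mul_nonneg (hp i).le hM0)
    _ = M := by rw [← Finset.sum_mul, hsum, one_mul]

theorem stmt14 (m : ℕ) (hm : 1 ≤ m) (t : SimpleGraph (Fin m)) (ht : t.IsTree)
    (p : Fin m → ℝ) (hp : ∀ v, 0 < p v) (hsum : ∑ v, p v = 1) (a : ℝ) (ha : 0 < a) :
    (∑ e ∈ (Set.toFinite t.edgeSet).toFinset,
        Sym2.lift ⟨fun i j => p i * p j, fun i j => mul_comm _ _⟩ e) ≤ (⨆ v, p v) ∧
    ((∏ e ∈ (Set.toFinite t.edgeSet).toFinset,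
        (Real.exp (a * Sym2.lift ⟨fun i j => p i * p j, fun i j => mul_comm _ _⟩ e) - 1) /
          (a * Sym2.lift ⟨fun i j => p i * p j, fun i j => mul_comm _ _⟩ e))
      ≤ Real.exp (a * ⨆ v, p v)) := by
  have hkey := tree_sum_le m hm t ht p hp hsum
  refine ⟨hkey, ?_⟩
  set g : Sym2 (Fin m) → ℝ := Sym2.lift ⟨fun i j => p i * p j, fun i j => mul_comm _ _⟩ with hg
  have hgpos : ∀ e ∈ (Set.toFinite t.edgeSet).toFinset, 0 < g e := by
    intro e he
    induction e using Sym2.ind with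
    | _ i j => simpa [hg] using mul_pos (hp i) (hp j)
  calc (∏ e ∈ (Set.toFinite t.edgeSet).toFinset, (Real.exp (a * g e) - 1) / (a * g e))
      ≤ ∏ e ∈ (Set.toFinite t.edgeSet).toFinset, Real.exp (a * g e) := by
        refine Finset.prod_le_prod (fun e he => ?_) (fun e he => ?_)
        · have hx : 0 < a * g e := mul_pos ha (hgpos e he)
          have h1 : (1:ℝ) ≤ Real.exp (a * g e) := by
            rw [Real.one_le_exp_iff]; exact hx.le
          apply div_nonneg (by linarith) hx.le
        · exact aux_exp_div _ (mul_pos ha (hgpos e he))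
    _ = Real.exp (∑ e ∈ (Set.toFinite t.edgeSet).toFinset, a * g e) := (Real.exp_sum _ _).symm
    _ ≤ Real.exp (a * ⨆ v, p v) := by
        rw [Real.exp_le_exp, ← Finset.mul_sum]
        exact mul_le_mul_of_nonneg_left hkey ha.le
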